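/- Composition of simultaneous dual-context substitutions is well-typed: given (σ'; δ') a dual substitution from Ψ'; Γ' to Ψ''; Γ'' and (σ; δ) a dual substitution from Ψ; Γ to Ψ'; Γ', their composite (σ' ∘ σ ; (δ'[σ]) ∘ δ) is a dual substitution from Ψ; Γ to Ψ''; Γ''. -/

import Mathlib

/-- Simple types: natural numbers, box modality, functions. -/
inductive Ty : Type
  | nat : Ty
  | box : Ty → Ty
  | arr : Ty → Ty → Ty

/-- Core types: built only from `nat` and arrows (no box). -/
inductive Core : Ty → Prop
  | nat : Core .nat
  | arr : ∀ {S T}, Core S → Core T → Core (.arr S T)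

/-- Layer-1 types: boxes may occur, but only over core types. -/
inductive Type1 : Ty → Prop
  | nat : Type1 .nat
  | arr : ∀ {S T}, Type1 S → Type1 T → Type1 (.arr S T)
  | box : ∀ {T}, Core T → Type1 (.box T)

/-- A context all of whose types are core. -/
def CoreCtx (Γ : List Ty) : Prop := ∀ T ∈ Γ, Core T

/-- A context all of whose types are layer-1 types. -/
def Type1Ctx (Γ : List Ty) : Prop := ∀ T ∈ Γ, Type1 T

/-- Terms (de Bruijn indices, separate local variables `var` and global variables `gvar`). -/
inductive Tm : Type
  | var : ℕ → Tm
  | gvar : ℕ → Tm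
  | zero : Tm
  | succ : Tm → Tm
  | box : Tm → Tm
  | letbox : Tm → Tm → Tm
  | lam : Tm → Tm
  | app : Tm → Tm → Tm

/-- Layered typing judgment `Ψ; Γ ⊢ᵢ t : T` of the 2-layered dual-context modal type theory.
`Ψ` is the global context, `Γ` the local context, `i ∈ {0,1}` the layer. -/
inductive Typing : List Ty → List Ty → Fin 2 → Tm → Ty → Prop
  | var0 : ∀ {Ψ Γ x T}, CoreCtx Ψ → CoreCtx Γ → Γ[x]? = some T → Typing Ψ Γ 0 (.var x) T
  | var1 : ∀ {Ψ Γ x T}, CoreCtx Ψ → Type1Ctx Γ → Γ[x]? = some T → Typing Ψ Γ 1 (.var x) T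
  | gvar0 : ∀ {Ψ Γ u T}, CoreCtx Ψ → CoreCtx Γ → Ψ[u]? = some T → Typing Ψ Γ 0 (.gvar u) T
  | gvar1 : ∀ {Ψ Γ u T}, CoreCtx Ψ → Type1Ctx Γ → Ψ[u]? = some T → Typing Ψ Γ 1 (.gvar u) T
  | zero0 : ∀ {Ψ Γ}, CoreCtx Ψ → CoreCtx Γ → Typing Ψ Γ 0 .zero .nat
  | zero1 : ∀ {Ψ Γ}, CoreCtx Ψ → Type1Ctx Γ → Typing Ψ Γ 1 .zero .nat
  | succ : ∀ {Ψ Γ i t}, Typing Ψ Γ i t .nat → Typing Ψ Γ i (.succ t) .nat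
  | lam : ∀ {Ψ Γ i t S T}, Typing Ψ (S :: Γ) i t T → Typing Ψ Γ i (.lam t) (.arr S T)
  | app : ∀ {Ψ Γ i t s S T},
      Typing Ψ Γ i t (.arr S T) → Typing Ψ Γ i s S → Typing Ψ Γ i (.app t s) T
  | box : ∀ {Ψ Γ t T}, Type1Ctx Γ → Typing Ψ [] 0 t T → Typing Ψ Γ 1 (.box t) (.box T)
  | letbox : ∀ {Ψ Γ s t T T'},
      Typing Ψ Γ 1 s (.box T) → Typing (T :: Ψ) Γ 1 t T' →
      Typing Ψ Γ 1 (.letbox s t) T'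

/-- Lift a renaming under a binder. -/
def liftR (f : ℕ → ℕ) : ℕ → ℕ
  | 0 => 0
  | n + 1 => f n + 1

/-- Simultaneous renaming of global variables (by `g`) and local variables (by `l`).
Local renaming is reset under `box` (boxed terms are locally closed); the global
renaming is lifted under the `letbox` binder and the local renaming under `lam`. -/
def rename (g l : ℕ → ℕ) : Tm → Tm
  | .var x => .var (l x)
  | .gvar u => .gvar (g u)
  | .zero => .zero
  | .succ t => .succ (rename g l t)
  | .box t => .box (rename g id t)
  | .letbox s t => .letbox (rename g l s) (rename (liftR g) l t)
  | .lam t => .lam (rename g (liftR l) t)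
  | .app t s => .app (rename g l t) (rename g l s)

/-- Shift indices `≥ c` up by one. -/
def shiftFn (c x : ℕ) : ℕ := if x < c then x else x + 1

/-- Shift local variables `≥ c` of a term up by one. -/
def lshift (c : ℕ) (t : Tm) : Tm := rename id (shiftFn c) t

/-- Shift global variables `≥ c` of a term up by one. -/
def gshift (c : ℕ) (t : Tm) : Tm := rename (shiftFn c) id t

/-- Lookup in a substitution (list of terms), with a default. -/
def lookupT (σ : List Tm) (u : ℕ) (dflt : Tm) : Tm :=
  match σ, u with
  | [], _ => dflt
  | t :: _, 0 => t
  | _ :: σ, u + 1 => lookupT σ u dflt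

/-- Typing of simultaneous global substitutions: `Ψ ⊢ σ : Φ`, each component
closed and typed at layer 0. -/
inductive GSubTy : List Ty → List Tm → List Ty → Prop
  | nil : ∀ {Ψ}, CoreCtx Ψ → GSubTy Ψ [] []
  | cons : ∀ {Ψ σ Φ t T}, GSubTy Ψ σ Φ → Typing Ψ [] 0 t T →
      GSubTy Ψ (t :: σ) (T :: Φ)

/-- Application of a simultaneous global substitution: `x[σ] = x`, `u[σ] = σ(u)`,
it commutes with `zero`, `succ`, `lam`, application and `box`, and under `letbox`
the substitution is extended with `u/u` (de Bruijn: `gvar 0` consed onto the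
globally shifted substitution). -/
def applyG (σ : List Tm) : Tm → Tm
  | .var x => .var x
  | .gvar u => lookupT σ u (.gvar u)
  | .zero => .zero
  | .succ t => .succ (applyG σ t)
  | .box t => .box (applyG σ t)
  | .letbox a b => .letbox (applyG σ a) (applyG (.gvar 0 :: σ.map (gshift 0)) b)
  | .lam t => .lam (applyG σ t)
  | .app a b => .app (applyG σ a) (applyG σ b)

/-- Typing of simultaneous local substitutions: `Ψ; Γ ⊢ δ : Δ`, each component
typed at layer 1. -/
inductive LSubTy : List Ty → List Ty → List Tm → List Ty → Prop
  | nil : ∀ {Ψ Γ}, CoreCtx Ψ → Type1Ctx Γ → LSubTy Ψ Γ [] []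
  | cons : ∀ {Ψ Γ δ Δ t T}, LSubTy Ψ Γ δ Δ → Typing Ψ Γ 1 t T →
      LSubTy Ψ Γ (t :: δ) (T :: Δ)

/-- Application of a simultaneous local substitution: `x[δ] = δ(x)`, global
variables are untouched, it does not go under `box`, the global variables of `δ`
are shifted under `letbox`, and `δ` is extended under `lam`. -/
def applyL (δ : List Tm) : Tm → Tm
  | .var x => lookupT δ x (.var x)
  | .gvar u => .gvar u
  | .zero => .zero
  | .succ t => .succ (applyL δ t)
  | .box t => .box t
  | .letbox a b => .letbox (applyL δ a) (applyL (δ.map (gshift 0)) b)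
  | .lam t => .lam (applyL (.var 0 :: δ.map (lshift 0)) t)
  | .app a b => .app (applyL δ a) (applyL δ b)

/-- Composition of global substitutions: apply `σ` to every component of `σ'`. -/
def gcomp (σ' σ : List Tm) : List Tm := σ'.map (applyG σ)

/-- Composition of local substitutions: apply `δ` to every component of `δ'`. -/
def lcomp (δ' δ : List Tm) : List Tm := δ'.map (applyL δ)

/-- A dual substitution `Ψ; Γ ⊢ (σ; δ) : (Φ; Δ)`: a pair of a global substitution
`Ψ ⊢ σ : Φ` and a local substitution `Ψ; Γ ⊢ δ : Δ`. -/
def DualTy (Ψ Γ : List Ty) (σ δ : List Tm) (Φ Δ : List Ty) : Prop :=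
  GSubTy Ψ σ Φ ∧ LSubTy Ψ Γ δ Δ

section Aux

lemma coreCtx_cons {S : Ty} {Γ : List Ty} : CoreCtx (S :: Γ) ↔ Core S ∧ CoreCtx Γ := by
  simp [CoreCtx]

lemma type1Ctx_cons {S : Ty} {Γ : List Ty} : Type1Ctx (S :: Γ) ↔ Type1 S ∧ Type1Ctx Γ := by
  simp [Type1Ctx]

lemma coreCtx_nil : CoreCtx [] := by intro T h; cases h

lemma type1Ctx_nil : Type1Ctx [] := by intro T h; cases h

lemma core_type1 {T : Ty} (h : Core T) : Type1 T := by
  induction h with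
  | nat => exact .nat
  | arr _ _ ih1 ih2 => exact .arr ih1 ih2

lemma coreCtx_type1Ctx {Γ : List Ty} (h : CoreCtx Γ) : Type1Ctx Γ :=
  fun T hT => core_type1 (h T hT)

lemma coreCtx_lookup {Γ : List Ty} {x : ℕ} {T : Ty} (h : CoreCtx Γ)
    (hx : Γ[x]? = some T) : Core T :=
  h T (List.mem_of_getElem? hx)

lemma type1Ctx_lookup {Γ : List Ty} {x : ℕ} {T : Ty} (h : Type1Ctx Γ)
    (hx : Γ[x]? = some T) : Type1 T :=
  h T (List.mem_of_getElem? hx)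

lemma typing_wf : ∀ {Ψ Γ i t T}, Typing Ψ Γ i t T →
    CoreCtx Ψ ∧ (i = 0 → CoreCtx Γ ∧ Core T) ∧ (i = 1 → Type1Ctx Γ ∧ Type1 T) := by
  intro Ψ Γ i t T h
  induction h with
  | var0 hΨ hΓ hx =>
      exact ⟨hΨ, fun _ => ⟨hΓ, coreCtx_lookup hΓ hx⟩, fun h => absurd h (by decide)⟩
  | var1 hΨ hΓ hx =>
      exact ⟨hΨ, fun h => absurd h (by decide), fun _ => ⟨hΓ, type1Ctx_lookup hΓ hx⟩⟩
  | gvar0 hΨ hΓ hu =>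
      exact ⟨hΨ, fun _ => ⟨hΓ, coreCtx_lookup hΨ hu⟩, fun h => absurd h (by decide)⟩
  | gvar1 hΨ hΓ hu =>
      exact ⟨hΨ, fun h => absurd h (by decide),
        fun _ => ⟨hΓ, core_type1 (coreCtx_lookup hΨ hu)⟩⟩
  | zero0 hΨ hΓ => exact ⟨hΨ, fun _ => ⟨hΓ, .nat⟩, fun h => absurd h (by decide)⟩
  | zero1 hΨ hΓ => exact ⟨hΨ, fun h => absurd h (by decide), fun _ => ⟨hΓ, .nat⟩⟩
  | succ _ ih =>
      exact ⟨ih.1, fun h => ⟨(ih.2.1 h).1, .nat⟩, fun h => ⟨(ih.2.2 h).1, .nat⟩⟩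
  | lam _ ih =>
      refine ⟨ih.1, fun h => ?_, fun h => ?_⟩
      · obtain ⟨hΓ, hT⟩ := ih.2.1 h
        rw [coreCtx_cons] at hΓ
        exact ⟨hΓ.2, .arr hΓ.1 hT⟩
      · obtain ⟨hΓ, hT⟩ := ih.2.2 h
        rw [type1Ctx_cons] at hΓ
        exact ⟨hΓ.2, .arr hΓ.1 hT⟩
  | app _ _ ih1 _ =>
      refine ⟨ih1.1, fun h => ?_, fun h => ?_⟩
      · obtain ⟨hΓ, hT⟩ := ih1.2.1 h
        cases hT with | arr _ h2 => exact ⟨hΓ, h2⟩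
      · obtain ⟨hΓ, hT⟩ := ih1.2.2 h
        cases hT with | arr _ h2 => exact ⟨hΓ, h2⟩
  | box hΓ _ ih =>
      exact ⟨ih.1, fun h => absurd h (by decide),
        fun _ => ⟨hΓ, .box (ih.2.1 rfl).2⟩⟩
  | letbox _ _ ih1 ih2 =>
      refine ⟨ih1.1, fun h => absurd h (by decide), fun _ => ?_⟩
      exact ih2.2.2 rfl

lemma rename_ty : ∀ {Ψ Γ i t T}, Typing Ψ Γ i t T →
    ∀ {Ψ' Γ' : List Ty} {g l : ℕ → ℕ},
    CoreCtx Ψ' → (i = 0 → CoreCtx Γ') → (i = 1 → Type1Ctx Γ') →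
    (∀ u U, Ψ[u]? = some U → Ψ'[g u]? = some U) →
    (∀ x U, Γ[x]? = some U → Γ'[l x]? = some U) →
    Typing Ψ' Γ' i (rename g l t) T := by
  intro Ψ Γ i t T h
  induction h with
  | var0 _ _ hx =>
      intro Ψ' Γ' g l hΨ' h0 h1 hg hl
      exact .var0 hΨ' (h0 rfl) (hl _ _ hx)
  | var1 _ _ hx =>
      intro Ψ' Γ' g l hΨ' h0 h1 hg hl
      exact .var1 hΨ' (h1 rfl) (hl _ _ hx)
  | gvar0 _ _ hu =>
      intro Ψ' Γ' g l hΨ' h0 h1 hg hl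
      exact .gvar0 hΨ' (h0 rfl) (hg _ _ hu)
  | gvar1 _ _ hu =>
      intro Ψ' Γ' g l hΨ' h0 h1 hg hl
      exact .gvar1 hΨ' (h1 rfl) (hg _ _ hu)
  | zero0 _ _ =>
      intro Ψ' Γ' g l hΨ' h0 h1 hg hl
      exact .zero0 hΨ' (h0 rfl)
  | zero1 _ _ =>
      intro Ψ' Γ' g l hΨ' h0 h1 hg hl
      exact .zero1 hΨ' (h1 rfl)
  | succ _ ih =>
      intro Ψ' Γ' g l hΨ' h0 h1 hg hl
      exact .succ (ih hΨ' h0 h1 hg hl)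
  | @lam Ψ Γ i t S T ht ih =>
      intro Ψ' Γ' g l hΨ' h0 h1 hg hl
      have hwf := typing_wf ht
      refine .lam (ih hΨ' ?_ ?_ hg ?_)
      · intro hi
        rw [coreCtx_cons]
        exact ⟨(coreCtx_cons.mp (hwf.2.1 hi).1).1, h0 hi⟩
      · intro hi
        rw [type1Ctx_cons]
        exact ⟨(type1Ctx_cons.mp (hwf.2.2 hi).1).1, h1 hi⟩
      · intro x U hx
        cases x with
        | zero => simpa [liftR] using hx
        | succ x => simp only [List.getElem?_cons_succ] at hx
                    simpa [liftR] using hl x U hx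
  | app _ _ ih1 ih2 =>
      intro Ψ' Γ' g l hΨ' h0 h1 hg hl
      exact .app (ih1 hΨ' h0 h1 hg hl) (ih2 hΨ' h0 h1 hg hl)
  | box hΓ _ ih =>
      intro Ψ' Γ' g l hΨ' h0 h1 hg hl
      refine .box (h1 rfl) (ih hΨ' (fun _ => coreCtx_nil) (fun h => absurd h (by decide)) hg ?_)
      intro x U hx
      simp at hx
  | @letbox Ψ Γ s t T T' hs ht ih1 ih2 =>
      intro Ψ' Γ' g l hΨ' h0 h1 hg hl
      have hT : Core T := by
        have := (typing_wf hs).2.2 rfl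
        cases this.2 with | box h => exact h
      refine .letbox (ih1 hΨ' h0 h1 hg hl) (ih2 ?_ h0 h1 ?_ hl)
      · rw [coreCtx_cons]; exact ⟨hT, hΨ'⟩
      · intro u U hu
        cases u with
        | zero => simpa [liftR] using hu
        | succ u => simp only [List.getElem?_cons_succ] at hu
                    simpa [liftR] using hg u U hu

lemma gshift_ty {Ψ Γ : List Ty} {i t T} {T' : Ty} (h : Typing Ψ Γ i t T) (hT' : Core T') :
    Typing (T' :: Ψ) Γ i (gshift 0 t) T := by
  have hwf := typing_wf h
  refine rename_ty h ?_ (fun hi => (hwf.2.1 hi).1) (fun hi => (hwf.2.2 hi).1) ?_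
    (fun x U hx => hx)
  · rw [coreCtx_cons]; exact ⟨hT', hwf.1⟩
  · intro u U hu
    simpa [shiftFn] using hu

lemma lshift_ty {Ψ Γ : List Ty} {t T} {S : Ty} (h : Typing Ψ Γ 1 t T) (hS : Type1 S) :
    Typing Ψ (S :: Γ) 1 (lshift 0 t) T := by
  have hwf := typing_wf h
  refine rename_ty h hwf.1 (fun hi => absurd hi (by decide)) ?_
    (fun u U hu => hu) ?_
  · intro _
    rw [type1Ctx_cons]
    exact ⟨hS, (hwf.2.2 rfl).1⟩
  · intro x U hx
    simpa [shiftFn] using hx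

/-- Weakening of a layer-0 judgment to an extended local context, possibly at layer 1. -/
lemma typing0_weaken : ∀ {Ψ Γ i t T}, Typing Ψ Γ i t T → i = 0 →
    ∀ (j : Fin 2) (Γ' : List Ty), (j = 0 → CoreCtx Γ') → (j = 1 → Type1Ctx Γ') →
    Typing Ψ (Γ ++ Γ') j t T := by
  intro Ψ Γ i t T h
  induction h with
  | @var0 Ψ Γ x T hΨ hΓ hx =>
      intro _ j Γ' h0 h1
      have hx' : (Γ ++ Γ')[x]? = some T := by
        rw [List.getElem?_append_left (List.getElem?_eq_some_iff.mp hx).1]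
        exact hx
      have hj : j = 0 ∨ j = 1 := by omega
      rcases hj with hj | hj <;> subst hj
      · exact .var0 hΨ (fun U hU => (List.mem_append.mp hU).elim (hΓ U) (h0 rfl U)) hx'
      · exact .var1 hΨ (fun U hU => (List.mem_append.mp hU).elim
          (fun hm => core_type1 (hΓ U hm)) (h1 rfl U)) hx'
  | var1 => intro h; exact absurd h (by decide)
  | gvar0 hΨ hΓ hu =>
      intro _ j Γ' h0 h1
      have hj : j = 0 ∨ j = 1 := by omega
      rcases hj with hj | hj <;> subst hj
      · exact .gvar0 hΨ (fun U hU => (List.mem_append.mp hU).elim (hΓ U) (h0 rfl U)) hu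
      · exact .gvar1 hΨ (fun U hU => (List.mem_append.mp hU).elim
          (fun hm => core_type1 (hΓ U hm)) (h1 rfl U)) hu
  | gvar1 => intro h; exact absurd h (by decide)
  | zero0 hΨ hΓ =>
      intro _ j Γ' h0 h1
      have hj : j = 0 ∨ j = 1 := by omega
      rcases hj with hj | hj <;> subst hj
      · exact .zero0 hΨ (fun U hU => (List.mem_append.mp hU).elim (hΓ U) (h0 rfl U))
      · exact .zero1 hΨ (fun U hU => (List.mem_append.mp hU).elim
          (fun hm => core_type1 (hΓ U hm)) (h1 rfl U))
  | zero1 => intro h; exact absurd h (by decide)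
  | succ _ ih => intro hi j Γ' h0 h1; exact .succ (ih hi j Γ' h0 h1)
  | lam _ ih => intro hi j Γ' h0 h1; exact .lam (ih hi j Γ' h0 h1)
  | app _ _ ih1 ih2 =>
      intro hi j Γ' h0 h1
      exact .app (ih1 hi j Γ' h0 h1) (ih2 hi j Γ' h0 h1)
  | box => intro h; exact absurd h (by decide)
  | letbox => intro h; exact absurd h (by decide)

lemma gsub_wf {Ψ σ Φ} (h : GSubTy Ψ σ Φ) : CoreCtx Ψ := by
  induction h with
  | nil h => exact h
  | cons _ _ ih => exact ih

lemma gsub_lookup : ∀ {Ψ σ Φ}, GSubTy Ψ σ Φ → ∀ {u : ℕ} {T d}, Φ[u]? = some T →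
    Typing Ψ [] 0 (lookupT σ u d) T := by
  intro Ψ σ Φ h
  induction h with
  | nil _ => intro u T d hu; simp at hu
  | cons _ ht ih =>
      intro u T d hu
      cases u with
      | zero => simp at hu; subst hu; exact ht
      | succ u =>
          simp only [List.getElem?_cons_succ] at hu
          exact ih hu

lemma gsub_ext {Ψ σ Φ} {T : Ty} (h : GSubTy Ψ σ Φ) (hT : Core T) :
    GSubTy (T :: Ψ) (.gvar 0 :: σ.map (gshift 0)) (T :: Φ) := by
  have hΨT : CoreCtx (T :: Ψ) := coreCtx_cons.mpr ⟨hT, gsub_wf h⟩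
  refine GSubTy.cons ?_ (.gvar0 hΨT coreCtx_nil (by simp))
  induction h with
  | nil _ => exact .nil hΨT
  | cons _ ht ih => exact .cons ih (gshift_ty ht hT)

/-- Generalized global substitution lemma. -/
lemma gsubst : ∀ {Φ Γ i t T}, Typing Φ Γ i t T → ∀ {Ψ σ}, GSubTy Ψ σ Φ →
    Typing Ψ Γ i (applyG σ t) T := by
  intro Φ Γ i t T h
  induction h with
  | var0 _ hΓ hx => intro Ψ σ hσ; exact .var0 (gsub_wf hσ) hΓ hx
  | var1 _ hΓ hx => intro Ψ σ hσ; exact .var1 (gsub_wf hσ) hΓ hx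
  | @gvar0 _ _ u _ _ hΓ hu =>
      intro Ψ σ hσ
      have := gsub_lookup hσ (d := .gvar u) hu
      simpa [applyG] using typing0_weaken this rfl 0 _ (fun _ => hΓ) (fun h => absurd h (by decide))
  | @gvar1 _ _ u _ _ hΓ hu =>
      intro Ψ σ hσ
      have := gsub_lookup hσ (d := .gvar u) hu
      simpa [applyG] using typing0_weaken this rfl 1 _ (fun h => absurd h (by decide)) (fun _ => hΓ)
  | zero0 _ hΓ => intro Ψ σ hσ; exact .zero0 (gsub_wf hσ) hΓ
  | zero1 _ hΓ => intro Ψ σ hσ; exact .zero1 (gsub_wf hσ) hΓ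
  | succ _ ih => intro Ψ σ hσ; exact .succ (ih hσ)
  | lam _ ih => intro Ψ σ hσ; exact .lam (ih hσ)
  | app _ _ ih1 ih2 => intro Ψ σ hσ; exact .app (ih1 hσ) (ih2 hσ)
  | box hΓ _ ih => intro Ψ σ hσ; exact .box hΓ (ih hσ)
  | @letbox Φ Γ s t T T' hs _ ih1 ih2 =>
      intro Ψ σ hσ
      have hT : Core T := by
        have := (typing_wf hs).2.2 rfl
        cases this.2 with | box h => exact h
      exact .letbox (ih1 hσ) (ih2 (gsub_ext hσ hT))

lemma lsub_wf {Ψ Γ δ Δ} (h : LSubTy Ψ Γ δ Δ) : CoreCtx Ψ ∧ Type1Ctx Γ := by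
  induction h with
  | nil h1 h2 => exact ⟨h1, h2⟩
  | cons _ _ ih => exact ih

lemma lsub_lookup : ∀ {Ψ Γ δ Δ}, LSubTy Ψ Γ δ Δ → ∀ {x : ℕ} {T d}, Δ[x]? = some T →
    Typing Ψ Γ 1 (lookupT δ x d) T := by
  intro Ψ Γ δ Δ h
  induction h with
  | nil _ _ => intro x T d hx; simp at hx
  | cons _ ht ih =>
      intro x T d hx
      cases x with
      | zero => simp at hx; subst hx; exact ht
      | succ x =>
          simp only [List.getElem?_cons_succ] at hx
          exact ih hx

lemma lsub_gext {Ψ Γ δ Δ} {T : Ty} (h : LSubTy Ψ Γ δ Δ) (hT : Core T) :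
    LSubTy (T :: Ψ) Γ (δ.map (gshift 0)) Δ := by
  induction h with
  | nil h1 h2 => exact .nil (coreCtx_cons.mpr ⟨hT, h1⟩) h2
  | cons _ ht ih => exact .cons ih (gshift_ty ht hT)

lemma lsub_lext {Ψ Γ δ Δ} {S : Ty} (h : LSubTy Ψ Γ δ Δ) (hS : Type1 S) :
    LSubTy Ψ (S :: Γ) (.var 0 :: δ.map (lshift 0)) (S :: Δ) := by
  have hΓ : Type1Ctx (S :: Γ) := type1Ctx_cons.mpr ⟨hS, (lsub_wf h).2⟩
  refine LSubTy.cons ?_ (.var1 (lsub_wf h).1 hΓ (by simp))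
  induction h with
  | nil h1 _ => exact .nil h1 hΓ
  | cons _ ht ih => exact .cons ih (lshift_ty ht hS)

/-- Local substitution lemma (layer 1). -/
lemma lsubst : ∀ {Ψ Δ i t T}, Typing Ψ Δ i t T → i = 1 → ∀ {Γ δ}, LSubTy Ψ Γ δ Δ →
    Typing Ψ Γ 1 (applyL δ t) T := by
  intro Ψ Δ i t T h
  induction h with
  | var0 => intro h; exact absurd h (by decide)
  | var1 _ _ hx => intro _ Γ δ hδ; exact lsub_lookup hδ hx
  | gvar0 => intro h; exact absurd h (by decide)
  | gvar1 hΨ _ hu => intro _ Γ δ hδ; exact .gvar1 hΨ (lsub_wf hδ).2 hu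
  | zero0 => intro h; exact absurd h (by decide)
  | zero1 hΨ _ => intro _ Γ δ hδ; exact .zero1 hΨ (lsub_wf hδ).2
  | succ _ ih => intro hi Γ δ hδ; exact .succ (ih hi hδ)
  | @lam Ψ Δ i t S T ht ih =>
      intro hi Γ δ hδ
      subst hi
      have hS : Type1 S := (type1Ctx_cons.mp ((typing_wf ht).2.2 rfl).1).1
      exact .lam (ih rfl (lsub_lext hδ hS))
  | app _ _ ih1 ih2 => intro hi Γ δ hδ; exact .app (ih1 hi hδ) (ih2 hi hδ)
  | box _ ht _ => intro _ Γ δ hδ; exact .box (lsub_wf hδ).2 ht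
  | @letbox Ψ Δ s t T T' hs _ ih1 ih2 =>
      intro _ Γ δ hδ
      have hT : Core T := by
        have := (typing_wf hs).2.2 rfl
        cases this.2 with | box h => exact h
      exact .letbox (ih1 rfl hδ) (ih2 rfl (lsub_gext hδ hT))

lemma gcomp_ty {Ψ Ψ' Ψ'' σ σ'} (h' : GSubTy Ψ' σ' Ψ'') (h : GSubTy Ψ σ Ψ') :
    GSubTy Ψ (gcomp σ' σ) Ψ'' := by
  induction h' with
  | nil _ => exact .nil (gsub_wf h)
  | cons _ ht ih => exact .cons ih (gsubst ht h)

lemma lsub_gsubst {Ψ Ψ' Γ' δ' Γ'' σ} (h' : LSubTy Ψ' Γ' δ' Γ'') (h : GSubTy Ψ σ Ψ')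
    (hΓ' : Type1Ctx Γ') : LSubTy Ψ Γ' (δ'.map (applyG σ)) Γ'' := by
  induction h' with
  | nil _ _ => exact .nil (gsub_wf h) hΓ'
  | cons _ ht ih => exact .cons ih (gsubst ht h)

lemma lcomp_ty {Ψ Γ Γ' δ δ'' Γ''} (h'' : LSubTy Ψ Γ' δ'' Γ'') (h : LSubTy Ψ Γ δ Γ') :
    LSubTy Ψ Γ (lcomp δ'' δ) Γ'' := by
  induction h'' with
  | nil _ _ => exact .nil (lsub_wf h).1 (lsub_wf h).2
  | cons _ ht ih => exact .cons ih (lsubst ht rfl h)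

end Aux

/-- Composition of simultaneous dual-context substitutions is well-typed:
if `Ψ'; Γ' ⊢ (σ'; δ') : (Ψ''; Γ'')` and `Ψ; Γ ⊢ (σ; δ) : (Ψ'; Γ')`, then
`Ψ; Γ ⊢ (σ' ∘ σ ; (δ'[σ]) ∘ δ) : (Ψ''; Γ'')`. -/
theorem dual_subst_comp :
    ∀ {Ψ Γ Ψ' Γ' Ψ'' Γ'' : List Ty} {σ δ σ' δ' : List Tm},
    DualTy Ψ' Γ' σ' δ' Ψ'' Γ'' → DualTy Ψ Γ σ δ Ψ' Γ' →
    DualTy Ψ Γ (gcomp σ' σ) (lcomp (δ'.map (applyG σ)) δ) Ψ'' Γ'' := by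
  rintro Ψ Γ Ψ' Γ' Ψ'' Γ'' σ δ σ' δ' ⟨hσ', hδ'⟩ ⟨hσ, hδ⟩
  exact ⟨gcomp_ty hσ' hσ, lcomp_ty (lsub_gsubst hδ' hσ (lsub_wf hδ').2) hδ⟩
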